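/- The following assertions are equivalent: (1) (A,C,ψ,x) is cleft; (2) the map *can : Hom_k(C,A) → End_{B'}(A), *can(f)(a) = a_ψ f(x^ψ), is a bijection onto the left B'-linear endomorphisms of A, and the right normal basis property holds, i.e. there exists a bijection h : B' ⊗_k C → A that is left B'-linear and right C-colinear (where A carries the coaction a ↦ a_ψ ⊗ x^ψ and B' ⊗_k C carries the coaction id ⊗ Δ). -/

import Mathlib

set_option linter.unusedSectionVars false
set_option maxHeartbeats 1000000


open TensorProduct

noncomputable section

variable {k A C : Type*} [CommRing k] [Ring A] [Algebra k A]
  [AddCommGroup C] [Module k C] [Coalgebra k C]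

/-- An entwining structure `(A, C, ψ)`. -/
structure IsEntwining (k : Type*) {A C : Type*} [CommRing k] [Ring A] [Algebra k A]
    [AddCommGroup C] [Module k C] [Coalgebra k C]
    (ψ : C ⊗[k] A →ₗ[k] A ⊗[k] C) : Prop where
  mul_compat : ψ ∘ₗ LinearMap.lTensor C (LinearMap.mul' k A) =
    LinearMap.rTensor C (LinearMap.mul' k A) ∘ₗ (TensorProduct.assoc k A A C).symm.toLinearMap ∘ₗ
      LinearMap.lTensor A ψ ∘ₗ (TensorProduct.assoc k A C A).toLinearMap ∘ₗ
      LinearMap.rTensor A ψ ∘ₗ (TensorProduct.assoc k C A A).symm.toLinearMap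
  one_compat : ∀ c : C, ψ (c ⊗ₜ[k] 1) = 1 ⊗ₜ[k] c
  comul_compat : LinearMap.lTensor A Coalgebra.comul ∘ₗ ψ =
    (TensorProduct.assoc k A C C).toLinearMap ∘ₗ LinearMap.rTensor C ψ ∘ₗ
      (TensorProduct.assoc k C A C).symm.toLinearMap ∘ₗ LinearMap.lTensor C ψ ∘ₗ
      (TensorProduct.assoc k C C A).toLinearMap ∘ₗ LinearMap.rTensor A Coalgebra.comul
  counit_compat : ∀ (c : C) (a : A),
    TensorProduct.rid k A (LinearMap.lTensor A Coalgebra.counit (ψ (c ⊗ₜ[k] a))) =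
      (Coalgebra.counit (R := k) c) • a

/-- The smash product multiplication on `Hom_k(C,A)`: `(f # g)(c) = f(c₂)_ψ g((c₁)^ψ)`. -/
def smashMul (ψ : C ⊗[k] A →ₗ[k] A ⊗[k] C) (f g : C →ₗ[k] A) : C →ₗ[k] A :=
  LinearMap.mul' k A ∘ₗ LinearMap.lTensor A g ∘ₗ ψ ∘ₗ LinearMap.lTensor C f ∘ₗ Coalgebra.comul

/-- The unit of `#(C,A)`: `c ↦ ε(c) 1_A`. -/
def smashOne (k : Type*) (A C : Type*) [CommRing k] [Ring A] [Algebra k A]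
    [AddCommGroup C] [Module k C] [Coalgebra k C] : C →ₗ[k] A :=
  Algebra.linearMap k A ∘ₗ Coalgebra.counit

/-- The ring morphism `i : A → #(C,A)`, `i(a)(c) = ε(c) a`. -/
def smashIota (k : Type*) {A : Type*} (C : Type*) [CommRing k] [Ring A] [Algebra k A]
    [AddCommGroup C] [Module k C] [Coalgebra k C] (a : A) : C →ₗ[k] A :=
  (Coalgebra.counit : C →ₗ[k] k).smulRight a


/-- Convolution product on `Hom_k(C,A)`: `(f * g)(c) = f(c₁) g(c₂)`. -/
def conv (f g : C →ₗ[k] A) : C →ₗ[k] A :=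
  LinearMap.mul' k A ∘ₗ TensorProduct.map f g ∘ₗ Coalgebra.comul

/-- `q ∈ Q'` iff `q(c₂)_ψ ⊗ (c₁)^ψ = q(c) ⊗ x` for all `c`. -/
def QprimeCond (ψ : C ⊗[k] A →ₗ[k] A ⊗[k] C) (x : C) (q : C →ₗ[k] A) : Prop :=
  ∀ c : C, ψ (LinearMap.lTensor C q (Coalgebra.comul c)) = q c ⊗ₜ[k] x

/-- `(A,C,ψ,x)` is cleft if there is a convolution invertible `λ ∈ Q'`. -/
def IsCleft (ψ : C ⊗[k] A →ₗ[k] A ⊗[k] C) (x : C) : Prop :=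
  ∃ lam lamInv : C →ₗ[k] A,
    (∀ c : C, conv lam lamInv c = (Coalgebra.counit (R := k) c) • (1 : A)) ∧
    (∀ c : C, conv lamInv lam c = (Coalgebra.counit (R := k) c) • (1 : A)) ∧
    QprimeCond ψ x lam

/-- The coinvariants `B' = {b : A | b_ψ ⊗ x^ψ = b ⊗ x}` as a `k`-submodule of `A`. -/
def Bprime (ψ : C ⊗[k] A →ₗ[k] A ⊗[k] C) (x : C) : Submodule k A :=
  LinearMap.ker (ψ ∘ₗ TensorProduct.mk k C A x - (TensorProduct.mk k A C).flip x)

/-- The map `*can : Hom_k(C,A) → End(A)`, `*can(f)(a) = a_ψ f(x^ψ)`. -/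
def starCan (ψ : C ⊗[k] A →ₗ[k] A ⊗[k] C) (x : C) (f : C →ₗ[k] A) : A →ₗ[k] A :=
  LinearMap.mul' k A ∘ₗ LinearMap.lTensor A f ∘ₗ ψ ∘ₗ TensorProduct.mk k C A x

namespace Ent

open LinearMap Coalgebra

variable (k)
/-- convolution unit -/
def u : C →ₗ[k] A := Algebra.linearMap k A ∘ₗ Coalgebra.counit
variable {k}

lemma u_apply (c : C) : u k (A := A) c = Coalgebra.counit (R := k) c • (1 : A) := by
  simp [u, Algebra.algebraMap_eq_smul_one]

variable (ψ : C ⊗[k] A →ₗ[k] A ⊗[k] C) (x : C)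

/-- the coaction `a ↦ ψ (x ⊗ a)` -/
def rho : A →ₗ[k] A ⊗[k] C := ψ ∘ₗ TensorProduct.mk k C A x

lemma rho_apply (a : A) : rho ψ x a = ψ (x ⊗ₜ[k] a) := rfl

variable {ψ x}

lemma mem_B_iff {b : A} : b ∈ Bprime ψ x ↔ ψ (x ⊗ₜ[k] b) = b ⊗ₜ[k] x := by
  simp only [Bprime, LinearMap.mem_ker, LinearMap.sub_apply, sub_eq_zero, LinearMap.coe_comp,
    Function.comp_apply, TensorProduct.mk_apply, LinearMap.flip_apply]

variable (ψ) in
/-- left multiplication action of `A` on `A ⊗ C` -/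
def Mact : A ⊗[k] (A ⊗[k] C) →ₗ[k] A ⊗[k] C :=
  LinearMap.rTensor C (LinearMap.mul' k A) ∘ₗ (TensorProduct.assoc k A A C).symm.toLinearMap

@[simp] lemma Mact_tmul (a b : A) (c : C) :
    Mact (k := k) (a ⊗ₜ[k] (b ⊗ₜ[k] c)) = (a * b) ⊗ₜ[k] c := by
  simp [Mact]

lemma Mact_one (z : A ⊗[k] C) : Mact (k := k) ((1 : A) ⊗ₜ[k] z) = z := by
  induction z using TensorProduct.induction_on with
  | zero => simp
  | tmul a c => simp
  | add y z hy hz => simp [tmul_add, map_add, hy, hz]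

lemma Mact_Mact (a b : A) (z : A ⊗[k] C) :
    Mact (k := k) (a ⊗ₜ[k] Mact (k := k) (b ⊗ₜ[k] z)) = Mact (k := k) ((a * b) ⊗ₜ[k] z) := by
  induction z using TensorProduct.induction_on with
  | zero => simp
  | tmul a' c => simp [mul_assoc]
  | add y z hy hz => simp only [tmul_add, map_add, hy, hz]

variable (ψ) in
def Xi : (A ⊗[k] C) ⊗[k] A →ₗ[k] A ⊗[k] C :=
  Mact (k := k) ∘ₗ LinearMap.lTensor A ψ ∘ₗ (TensorProduct.assoc k A C A).toLinearMap

lemma Xi_tmul (a : A) (c : C) (b : A) :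
    Xi ψ ((a ⊗ₜ[k] c) ⊗ₜ[k] b) = Mact (k := k) (a ⊗ₜ[k] ψ (c ⊗ₜ[k] b)) := by
  simp [Xi]

lemma psi_tmul_mul (hψ : IsEntwining k ψ) (c : C) (a b : A) :
    ψ (c ⊗ₜ[k] (a * b)) = Xi ψ (ψ (c ⊗ₜ[k] a) ⊗ₜ[k] b) := by
  have := LinearMap.congr_fun hψ.mul_compat (c ⊗ₜ[k] (a ⊗ₜ[k] b))
  simpa [Xi, Mact] using this

lemma rho_mul (hψ : IsEntwining k ψ) (a b : A) :
    rho ψ x (a * b) = Xi ψ (rho ψ x a ⊗ₜ[k] b) :=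
  psi_tmul_mul hψ x a b

lemma rho_comp_mul (hψ : IsEntwining k ψ) :
    rho ψ x ∘ₗ LinearMap.mul' k A = Xi ψ ∘ₗ LinearMap.rTensor A (rho ψ x) := by
  ext a b
  simpa using rho_mul hψ a b

lemma rho_mul_left (hψ : IsEntwining k ψ) {b : A} (hb : b ∈ Bprime ψ x) (a : A) :
    rho ψ x (b * a) = Mact (k := k) (b ⊗ₜ[k] rho ψ x a) := by
  rw [rho_mul hψ, rho_apply, mem_B_iff.mp hb, Xi_tmul, ← rho_apply]

lemma aux_rT_psi (w : A ⊗[k] C) :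
    LinearMap.rTensor C ψ ((TensorProduct.assoc k C A C).symm (x ⊗ₜ[k] w)) =
      LinearMap.rTensor C (rho ψ x) w := by
  induction w using TensorProduct.induction_on with
  | zero => simp
  | tmul a c => simp [rho_apply]
  | add y z hy hz => simp only [tmul_add, map_add, hy, hz]

lemma rho_coassoc (hψ : IsEntwining k ψ) (hx1 : Coalgebra.comul (R := k) x = x ⊗ₜ[k] x)
    (a : A) :
    LinearMap.lTensor A Coalgebra.comul (rho ψ x a) =
      (TensorProduct.assoc k A C C) (LinearMap.rTensor C (rho ψ x) (rho ψ x a)) := by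
  have h1 := LinearMap.congr_fun hψ.comul_compat (x ⊗ₜ[k] a)
  simp only [LinearMap.coe_comp, Function.comp_apply, LinearEquiv.coe_coe,
    LinearMap.rTensor_tmul, hx1] at h1
  have h2 : (LinearMap.lTensor C ψ) ((TensorProduct.assoc k C C A) ((x ⊗ₜ[k] x) ⊗ₜ[k] a))
      = x ⊗ₜ[k] rho ψ x a := by
    simp [rho_apply]
  rw [rho_apply, h1, h2, aux_rT_psi, rho_apply]

lemma rho_coassoc' (hψ : IsEntwining k ψ) (hx1 : Coalgebra.comul (R := k) x = x ⊗ₜ[k] x)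
    (a : A) :
    LinearMap.rTensor C (rho ψ x) (rho ψ x a) =
      (TensorProduct.assoc k A C C).symm (LinearMap.lTensor A Coalgebra.comul (rho ψ x a)) := by
  rw [rho_coassoc hψ hx1]; simp

lemma counit_rho (hψ : IsEntwining k ψ) (hx2 : Coalgebra.counit (R := k) x = (1 : k)) (a : A) :
    TensorProduct.rid k A (LinearMap.lTensor A Coalgebra.counit (rho ψ x a)) = a := by
  rw [rho_apply, hψ.counit_compat, hx2, one_smul]

lemma one_mem_B (hψ : IsEntwining k ψ) : (1 : A) ∈ Bprime ψ x := by
  rw [mem_B_iff, hψ.one_compat]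

lemma mul_mem_B (hψ : IsEntwining k ψ) {b b' : A} (hb : b ∈ Bprime ψ x)
    (hb' : b' ∈ Bprime ψ x) : b * b' ∈ Bprime ψ x := by
  rw [mem_B_iff, ← rho_apply, rho_mul_left hψ hb, rho_apply, mem_B_iff.mp hb', Mact_tmul]

lemma starCan_apply (f : C →ₗ[k] A) (a : A) :
    starCan ψ x f a = LinearMap.mul' k A (LinearMap.lTensor A f (rho ψ x a)) := rfl

lemma mul_lT_Mact (f : C →ₗ[k] A) (b : A) (w : A ⊗[k] C) :
    LinearMap.mul' k A (LinearMap.lTensor A f (Mact (k := k) (b ⊗ₜ[k] w))) =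
      b * LinearMap.mul' k A (LinearMap.lTensor A f w) := by
  induction w using TensorProduct.induction_on with
  | zero => simp
  | tmul a c => simp [mul_assoc]
  | add y z hy hz => simp only [tmul_add, map_add, mul_add, hy, hz]

lemma starCan_B_linear (hψ : IsEntwining k ψ) (f : C →ₗ[k] A) {b : A}
    (hb : b ∈ Bprime ψ x) (a : A) :
    starCan ψ x f (b * a) = b * starCan ψ x f a := by
  rw [starCan_apply, starCan_apply, rho_mul_left hψ hb, mul_lT_Mact]

variable (ψ x) in
def IsColin (g : C →ₗ[k] A) : Prop :=
  ∀ c : C, rho ψ x (g c) = LinearMap.rTensor C g (Coalgebra.comul c)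

lemma starCan_colin {g : C →ₗ[k] A} (hg : IsColin ψ x g) (f : C →ₗ[k] A) (c : C) :
    starCan ψ x f (g c) = conv g f c := by
  rw [starCan_apply, hg c, conv]
  simp only [LinearMap.coe_comp, Function.comp_apply]
  congr 1
  rw [← LinearMap.comp_apply, LinearMap.lTensor_comp_rTensor]

section Conv
open Coalgebra

lemma conv_repr (f g : C →ₗ[k] A) (c : C) (r : Coalgebra.Repr k c (C × C)) :
    conv f g c = ∑ i ∈ r.index, f (r.left i) * g (r.right i) := by
  simp [conv, ← r.eq, map_sum]

lemma counit_smul_sum (c : C) (r : Coalgebra.Repr k c (C × C)) :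
    ∑ i ∈ r.index, Coalgebra.counit (R := k) (r.left i) • r.right i = c := by
  calc ∑ i ∈ r.index, Coalgebra.counit (R := k) (r.left i) • r.right i
      = TensorProduct.lid k C (∑ i ∈ r.index,
          Coalgebra.counit (R := k) (r.left i) ⊗ₜ[k] r.right i) := by
        rw [map_sum]; simp
    _ = TensorProduct.lid k C ((1 : k) ⊗ₜ[k] c) := by rw [Coalgebra.sum_counit_tmul_eq r]
    _ = c := by simp

lemma counit_smul_sum' (c : C) (r : Coalgebra.Repr k c (C × C)) :
    ∑ i ∈ r.index, Coalgebra.counit (R := k) (r.right i) • r.left i = c := by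
  calc ∑ i ∈ r.index, Coalgebra.counit (R := k) (r.right i) • r.left i
      = TensorProduct.rid k C (∑ i ∈ r.index,
          r.left i ⊗ₜ[k] Coalgebra.counit (R := k) (r.right i)) := by
        rw [map_sum]; simp
    _ = TensorProduct.rid k C (c ⊗ₜ[k] (1 : k)) := by rw [Coalgebra.sum_tmul_counit_eq r]
    _ = c := by simp

lemma conv_u_right (f : C →ₗ[k] A) : conv f (u k) = f := by
  ext c
  obtain r := Coalgebra.Repr.arbitrary k c
  rw [conv_repr f _ c r]
  simp only [u_apply, mul_smul_comm, mul_one]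
  rw [show ∑ i ∈ r.index, Coalgebra.counit (R := k) (r.right i) • f (r.left i)
      = f (∑ i ∈ r.index, Coalgebra.counit (R := k) (r.right i) • r.left i) by
    simp [map_sum, map_smul]]
  rw [counit_smul_sum' c r]

lemma conv_u_left (f : C →ₗ[k] A) : conv (u k) f = f := by
  ext c
  obtain r := Coalgebra.Repr.arbitrary k c
  rw [conv_repr _ f c r]
  simp only [u_apply, smul_mul_assoc, one_mul]
  rw [show ∑ i ∈ r.index, Coalgebra.counit (R := k) (r.left i) • f (r.right i)
      = f (∑ i ∈ r.index, Coalgebra.counit (R := k) (r.left i) • r.right i) by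
    simp [map_sum, map_smul]]
  rw [counit_smul_sum c r]

lemma conv_assoc (f g h : C →ₗ[k] A) : conv (conv f g) h = conv f (conv g h) := by
  ext c
  obtain r := Coalgebra.Repr.arbitrary k c
  have r1 : ∀ i, Coalgebra.Repr k (r.left i) (C × C) := fun i => Coalgebra.Repr.arbitrary k _
  have r2 : ∀ i, Coalgebra.Repr k (r.right i) (C × C) := fun i => Coalgebra.Repr.arbitrary k _
  have key := Coalgebra.sum_tmul_tmul_eq r r1 r2
  apply_fun (LinearMap.mul' k A ∘ₗ LinearMap.lTensor A (LinearMap.mul' k A) ∘ₗ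
      TensorProduct.map f (TensorProduct.map g h)) at key
  simp only [map_sum, LinearMap.coe_comp, Function.comp_apply, TensorProduct.map_tmul,
    LinearMap.lTensor_tmul, LinearMap.mul'_apply, mul_assoc] at key
  rw [conv_repr _ h c r, conv_repr f _ c r]
  calc ∑ i ∈ r.index, conv f g (r.left i) * h (r.right i)
      = ∑ i ∈ r.index, ∑ j ∈ (r1 i).index,
          f ((r1 i).left j) * (g ((r1 i).right j) * h (r.right i)) := by
        refine Finset.sum_congr rfl fun i _ => ?_
        rw [conv_repr f g _ (r1 i), Finset.sum_mul]
        simp [mul_assoc]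
    _ = ∑ i ∈ r.index, ∑ j ∈ (r2 i).index,
          f (r.left i) * (g ((r2 i).left j) * h ((r2 i).right j)) := key
    _ = ∑ i ∈ r.index, f (r.left i) * conv g h (r.right i) := by
        refine Finset.sum_congr rfl fun i _ => ?_
        rw [conv_repr g h _ (r2 i), Finset.mul_sum]

end Conv

section MC
open Coalgebra

variable (ψ) in
/-- `(f ⊳ F)(c) = f(c₁)·F(c₂)` -/
def MC (f : C →ₗ[k] A) (F : C →ₗ[k] A ⊗[k] C) : C →ₗ[k] A ⊗[k] C :=
  Mact (k := k) ∘ₗ TensorProduct.map f F ∘ₗ Coalgebra.comul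

lemma MC_repr (f : C →ₗ[k] A) (F : C →ₗ[k] A ⊗[k] C) (c : C) (r : Coalgebra.Repr k c (C × C)) :
    MC f F c = ∑ i ∈ r.index, Mact (k := k) (f (r.left i) ⊗ₜ[k] F (r.right i)) := by
  simp [MC, ← r.eq, map_sum]

lemma Mact_smul_one (s : k) (z : A ⊗[k] C) :
    Mact (k := k) ((s • (1 : A)) ⊗ₜ[k] z) = s • z := by
  rw [← TensorProduct.smul_tmul', map_smul, Mact_one]

lemma rec_lemma {q qbar : C →ₗ[k] A} (hu : conv qbar q = u k)
    (F : C →ₗ[k] A ⊗[k] C) : MC qbar (MC q F) = F := by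
  ext c
  obtain r := Coalgebra.Repr.arbitrary k c
  have r1 : ∀ i, Coalgebra.Repr k (r.left i) (C × C) := fun i => Coalgebra.Repr.arbitrary k _
  have r2 : ∀ i, Coalgebra.Repr k (r.right i) (C × C) := fun i => Coalgebra.Repr.arbitrary k _
  have key := Coalgebra.sum_tmul_tmul_eq r r1 r2
  apply_fun (Mact (k := k) ∘ₗ LinearMap.lTensor A (Mact (k := k)) ∘ₗ
      TensorProduct.map qbar (TensorProduct.map q F)) at key
  simp only [map_sum, LinearMap.coe_comp, Function.comp_apply, TensorProduct.map_tmul,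
    LinearMap.lTensor_tmul] at key
  calc MC qbar (MC q F) c
      = ∑ i ∈ r.index, Mact (k := k) (qbar (r.left i) ⊗ₜ[k] MC q F (r.right i)) :=
        MC_repr _ _ c r
    _ = ∑ i ∈ r.index, ∑ j ∈ (r2 i).index, Mact (k := k) (qbar (r.left i) ⊗ₜ[k]
          Mact (k := k) (q ((r2 i).left j) ⊗ₜ[k] F ((r2 i).right j))) := by
        refine Finset.sum_congr rfl fun i _ => ?_
        rw [MC_repr q F _ (r2 i), TensorProduct.tmul_sum, map_sum]
    _ = ∑ i ∈ r.index, ∑ j ∈ (r1 i).index, Mact (k := k) (qbar ((r1 i).left j) ⊗ₜ[k]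
          Mact (k := k) (q ((r1 i).right j) ⊗ₜ[k] F (r.right i))) := key.symm
    _ = ∑ i ∈ r.index, Mact (k := k) (conv qbar q (r.left i) ⊗ₜ[k] F (r.right i)) := by
        refine Finset.sum_congr rfl fun i _ => ?_
        rw [conv_repr qbar q _ (r1 i), TensorProduct.sum_tmul, map_sum]
        refine Finset.sum_congr rfl fun j _ => ?_
        rw [Mact_Mact]
    _ = ∑ i ∈ r.index, Coalgebra.counit (R := k) (r.left i) • F (r.right i) := by
        refine Finset.sum_congr rfl fun i _ => ?_
        rw [hu, u_apply, Mact_smul_one]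
    _ = F c := by
        rw [show ∑ i ∈ r.index, Coalgebra.counit (R := k) (r.left i) • F (r.right i)
            = F (∑ i ∈ r.index, Coalgebra.counit (R := k) (r.left i) • r.right i) by
          simp [map_sum, map_smul]]
        rw [counit_smul_sum c r]

lemma gen1 (f g : C →ₗ[k] A) :
    MC f (LinearMap.rTensor C g ∘ₗ Coalgebra.comul) =
      LinearMap.rTensor C (conv f g) ∘ₗ Coalgebra.comul := by
  ext c
  obtain r := Coalgebra.Repr.arbitrary k c
  have r1 : ∀ i, Coalgebra.Repr k (r.left i) (C × C) := fun i => Coalgebra.Repr.arbitrary k _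
  have r2 : ∀ i, Coalgebra.Repr k (r.right i) (C × C) := fun i => Coalgebra.Repr.arbitrary k _
  have key := Coalgebra.sum_tmul_tmul_eq r r1 r2
  apply_fun ((TensorProduct.assoc k A A C).symm.toLinearMap ∘ₗ
      TensorProduct.map f (TensorProduct.map g LinearMap.id) : C ⊗[k] (C ⊗[k] C) →ₗ[k] _) at key
  simp only [map_sum, LinearMap.coe_comp, Function.comp_apply, TensorProduct.map_tmul,
    LinearEquiv.coe_coe, TensorProduct.assoc_symm_tmul, LinearMap.id_coe, id_eq] at key
  apply_fun (LinearMap.rTensor C (LinearMap.mul' k A)) at key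
  simp only [map_sum, LinearMap.rTensor_tmul, LinearMap.mul'_apply] at key
  calc MC f (LinearMap.rTensor C g ∘ₗ Coalgebra.comul) c
      = ∑ i ∈ r.index, Mact (k := k) (f (r.left i) ⊗ₜ[k]
          LinearMap.rTensor C g (Coalgebra.comul (r.right i))) := MC_repr _ _ c r
    _ = ∑ i ∈ r.index, ∑ j ∈ (r2 i).index,
          (f (r.left i) * g ((r2 i).left j)) ⊗ₜ[k] (r2 i).right j := by
        refine Finset.sum_congr rfl fun i _ => ?_
        rw [← (r2 i).eq, map_sum, TensorProduct.tmul_sum, map_sum]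
        refine Finset.sum_congr rfl fun j _ => ?_
        rw [LinearMap.rTensor_tmul, Mact_tmul]
    _ = ∑ i ∈ r.index, ∑ j ∈ (r1 i).index,
          (f ((r1 i).left j) * g ((r1 i).right j)) ⊗ₜ[k] r.right i := key.symm
    _ = ∑ i ∈ r.index, conv f g (r.left i) ⊗ₜ[k] r.right i := by
        refine Finset.sum_congr rfl fun i _ => ?_
        rw [conv_repr f g _ (r1 i), TensorProduct.sum_tmul]
    _ = (LinearMap.rTensor C (conv f g) ∘ₗ Coalgebra.comul) c := by
        rw [LinearMap.comp_apply, ← r.eq, map_sum]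
        simp

lemma rT_u_comul (c : C) :
    LinearMap.rTensor C (u k (A := A)) (Coalgebra.comul c) = (1 : A) ⊗ₜ[k] c := by
  obtain r := Coalgebra.Repr.arbitrary k c
  rw [← r.eq, map_sum]
  calc ∑ i ∈ r.index, u k (A := A) (r.left i) ⊗ₜ[k] r.right i
      = ∑ i ∈ r.index, Coalgebra.counit (R := k) (r.left i) • ((1:A) ⊗ₜ[k] r.right i) := by
        refine Finset.sum_congr rfl fun i _ => ?_
        rw [u_apply, TensorProduct.smul_tmul']
    _ = (TensorProduct.mk k A C 1) (∑ i ∈ r.index,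
          Coalgebra.counit (R := k) (r.left i) • r.right i) := by simp [map_sum, map_smul]
    _ = (1 : A) ⊗ₜ[k] c := by rw [counit_smul_sum c r]; rfl

end MC

section CanRho
open Coalgebra

lemma step2 (q : C →ₗ[k] A) (w : A ⊗[k] C) :
    LinearMap.rTensor A (rho ψ x) (LinearMap.lTensor A q w) =
      LinearMap.lTensor (A ⊗[k] C) q (LinearMap.rTensor C (rho ψ x) w) := by
  induction w using TensorProduct.induction_on with
  | zero => simp
  | tmul a c => simp
  | add y z hy hz => simp only [map_add, hy, hz]

lemma step4maps (q : C →ₗ[k] A) :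
    Xi ψ ∘ₗ LinearMap.lTensor (A ⊗[k] C) q =
      Mact (k := k) ∘ₗ LinearMap.lTensor A (ψ ∘ₗ LinearMap.lTensor C q) ∘ₗ
        (TensorProduct.assoc k A C C).toLinearMap := by
  apply TensorProduct.ext_threefold
  intro a c c'
  simp [Xi]

lemma Mact_lT_iota (q : C →ₗ[k] A) (w : A ⊗[k] C) :
    Mact (k := k) (LinearMap.lTensor A ((TensorProduct.mk k A C).flip x ∘ₗ q) w) =
      LinearMap.mul' k A (LinearMap.lTensor A q w) ⊗ₜ[k] x := by
  induction w using TensorProduct.induction_on with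
  | zero => simp
  | tmul a c => simp
  | add y z hy hz => simp only [map_add, hy, hz, TensorProduct.add_tmul]

lemma can_rho (hψ : IsEntwining k ψ) (hx1 : Coalgebra.comul (R := k) x = x ⊗ₜ[k] x)
    (q : C →ₗ[k] A) (a : A) :
    rho ψ x (starCan ψ x q a) =
      Mact (k := k) (LinearMap.lTensor A
        (ψ ∘ₗ LinearMap.lTensor C q ∘ₗ Coalgebra.comul) (rho ψ x a)) := by
  calc rho ψ x (starCan ψ x q a)
      = Xi ψ (LinearMap.rTensor A (rho ψ x) (LinearMap.lTensor A q (rho ψ x a))) := by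
        rw [starCan_apply, ← LinearMap.comp_apply (rho ψ x), rho_comp_mul hψ]; rfl
    _ = Xi ψ (LinearMap.lTensor (A ⊗[k] C) q
          (LinearMap.rTensor C (rho ψ x) (rho ψ x a))) := by rw [step2]
    _ = Xi ψ (LinearMap.lTensor (A ⊗[k] C) q ((TensorProduct.assoc k A C C).symm
          (LinearMap.lTensor A Coalgebra.comul (rho ψ x a)))) := by
        rw [rho_coassoc' hψ hx1]
    _ = Mact (k := k) (LinearMap.lTensor A (ψ ∘ₗ LinearMap.lTensor C q)
          ((TensorProduct.assoc k A C C) ((TensorProduct.assoc k A C C).symm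
            (LinearMap.lTensor A Coalgebra.comul (rho ψ x a))))) := by
        have := LinearMap.congr_fun (step4maps (ψ := ψ) q) ((TensorProduct.assoc k A C C).symm
          (LinearMap.lTensor A Coalgebra.comul (rho ψ x a)))
        simp only [LinearMap.coe_comp, Function.comp_apply, LinearEquiv.coe_coe] at this
        exact this
    _ = Mact (k := k) (LinearMap.lTensor A
          (ψ ∘ₗ LinearMap.lTensor C q ∘ₗ Coalgebra.comul) (rho ψ x a)) := by
        rw [LinearEquiv.apply_symm_apply]
        congr 1
        rw [← LinearMap.comp_apply, ← LinearMap.lTensor_comp, LinearMap.comp_assoc]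

lemma coinv (hψ : IsEntwining k ψ) (hx1 : Coalgebra.comul (R := k) x = x ⊗ₜ[k] x)
    {q : C →ₗ[k] A} (hQ : QprimeCond ψ x q) (a : A) : starCan ψ x q a ∈ Bprime ψ x := by
  have hG : (ψ ∘ₗ LinearMap.lTensor C q ∘ₗ Coalgebra.comul) =
      (TensorProduct.mk k A C).flip x ∘ₗ q := by
    ext c; exact hQ c
  rw [mem_B_iff, ← rho_apply, can_rho hψ hx1, hG, Mact_lT_iota, starCan_apply]

lemma qcrit (hψ : IsEntwining k ψ) (hx1 : Coalgebra.comul (R := k) x = x ⊗ₜ[k] x)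
    {γ γb q : C →ₗ[k] A} (hγ : IsColin ψ x γ) (hu : conv γb γ = u k)
    (hB : ∀ a, starCan ψ x q a ∈ Bprime ψ x) : QprimeCond ψ x q := by
  have claim0 : ∀ (F : C →ₗ[k] A ⊗[k] C) (c : C),
      MC γ F c = Mact (k := k) (LinearMap.lTensor A F (rho ψ x (γ c))) := by
    intro F c
    rw [hγ c, ← LinearMap.comp_apply (LinearMap.lTensor A F), LinearMap.lTensor_comp_rTensor]
    rfl
  have claim1 : ∀ a : A,
      Mact (k := k) (LinearMap.lTensor A
        (ψ ∘ₗ LinearMap.lTensor C q ∘ₗ Coalgebra.comul) (rho ψ x a)) =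
      Mact (k := k) (LinearMap.lTensor A
        ((TensorProduct.mk k A C).flip x ∘ₗ q) (rho ψ x a)) := by
    intro a
    rw [← can_rho hψ hx1, rho_apply, mem_B_iff.mp (hB a), Mact_lT_iota, ← starCan_apply]
  have hMC : MC γ (ψ ∘ₗ LinearMap.lTensor C q ∘ₗ Coalgebra.comul)
      = MC γ ((TensorProduct.mk k A C).flip x ∘ₗ q) := by
    ext c
    rw [claim0, claim0, claim1]
  have hF : (ψ ∘ₗ LinearMap.lTensor C q ∘ₗ Coalgebra.comul)
      = ((TensorProduct.mk k A C).flip x ∘ₗ q) := by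
    rw [← rec_lemma hu (ψ ∘ₗ LinearMap.lTensor C q ∘ₗ Coalgebra.comul), hMC, rec_lemma hu]
  intro c
  exact LinearMap.congr_fun hF c

lemma colin_of_inv (hψ : IsEntwining k ψ) {lam γ : C →ₗ[k] A}
    (h1 : conv lam γ = u k) (h2 : conv γ lam = u k) (hQ : QprimeCond ψ x lam) :
    IsColin ψ x γ := by
  have keymain : MC lam (rho ψ x ∘ₗ γ) = MC lam (LinearMap.rTensor C γ ∘ₗ Coalgebra.comul) := by
    ext c
    obtain r := Coalgebra.Repr.arbitrary k c
    have r1 : ∀ i, Coalgebra.Repr k (r.left i) (C × C) := fun i => Coalgebra.Repr.arbitrary k _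
    have r2 : ∀ i, Coalgebra.Repr k (r.right i) (C × C) := fun i => Coalgebra.Repr.arbitrary k _
    have key := Coalgebra.sum_tmul_tmul_eq r r1 r2
    apply_fun (ψ ∘ₗ LinearMap.lTensor C (LinearMap.mul' k A) ∘ₗ
        LinearMap.lTensor C (TensorProduct.map lam γ) : C ⊗[k] (C ⊗[k] C) →ₗ[k] _) at key
    simp only [map_sum, LinearMap.coe_comp, Function.comp_apply, LinearMap.lTensor_tmul,
      TensorProduct.map_tmul, LinearMap.mul'_apply] at key
    calc MC lam (rho ψ x ∘ₗ γ) c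
        = ∑ i ∈ r.index, Mact (k := k) (lam (r.left i) ⊗ₜ[k] rho ψ x (γ (r.right i))) :=
          MC_repr _ _ c r
      _ = ∑ i ∈ r.index, Xi ψ (ψ (LinearMap.lTensor C lam (Coalgebra.comul (r.left i)))
            ⊗ₜ[k] γ (r.right i)) := by
          refine Finset.sum_congr rfl fun i _ => ?_
          rw [hQ (r.left i), Xi_tmul, rho_apply]
      _ = ∑ i ∈ r.index, ∑ j ∈ (r1 i).index,
            ψ ((r1 i).left j ⊗ₜ[k] (lam ((r1 i).right j) * γ (r.right i))) := by
          refine Finset.sum_congr rfl fun i _ => ?_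
          rw [← (r1 i).eq, map_sum, map_sum, TensorProduct.sum_tmul, map_sum]
          refine Finset.sum_congr rfl fun j _ => ?_
          rw [LinearMap.lTensor_tmul, ← psi_tmul_mul hψ]
      _ = ∑ i ∈ r.index, ∑ j ∈ (r2 i).index,
            ψ (r.left i ⊗ₜ[k] (lam ((r2 i).left j) * γ ((r2 i).right j))) := key
      _ = ∑ i ∈ r.index, ψ (r.left i ⊗ₜ[k] conv lam γ (r.right i)) := by
          refine Finset.sum_congr rfl fun i _ => ?_
          rw [conv_repr lam γ _ (r2 i), TensorProduct.tmul_sum, map_sum]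
      _ = ∑ i ∈ r.index, Coalgebra.counit (R := k) (r.right i) • ((1:A) ⊗ₜ[k] r.left i) := by
          refine Finset.sum_congr rfl fun i _ => ?_
          rw [h1, u_apply, TensorProduct.tmul_smul, map_smul, hψ.one_compat]
      _ = (TensorProduct.mk k A C 1) (∑ i ∈ r.index,
            Coalgebra.counit (R := k) (r.right i) • r.left i) := by simp [map_sum, map_smul]
      _ = (1 : A) ⊗ₜ[k] c := by rw [counit_smul_sum' c r]; rfl
      _ = MC lam (LinearMap.rTensor C γ ∘ₗ Coalgebra.comul) c := by
          rw [gen1, LinearMap.comp_apply, h1, rT_u_comul]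
  intro c
  have := LinearMap.congr_fun
    (by rw [← rec_lemma h2 (rho ψ x ∘ₗ γ), keymain, rec_lemma h2] :
      rho ψ x ∘ₗ γ = LinearMap.rTensor C γ ∘ₗ Coalgebra.comul) c
  exact this

end CanRho

section Forward
open Coalgebra

variable (hψ : IsEntwining k ψ) (hx1 : Coalgebra.comul (R := k) x = x ⊗ₜ[k] x)
  (hx2 : Coalgebra.counit (R := k) x = (1 : k))
  {lam lamInv : C →ₗ[k] A}
  (h1 : conv lam lamInv = u k) (h2 : conv lamInv lam = u k) (hQ : QprimeCond ψ x lam)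

/-- the would-be normal basis map `b ⊗ c ↦ b·λ⁻¹(c)` -/
def hmap : (↥(Bprime ψ x)) ⊗[k] C →ₗ[k] A :=
  LinearMap.mul' k A ∘ₗ TensorProduct.map (Bprime ψ x).subtype lamInv

lemma hmap_tmul (b : ↥(Bprime ψ x)) (c : C) :
    hmap (lamInv := lamInv) (b ⊗ₜ[k] c) = (b : A) * lamInv c := rfl

/-- the would-be inverse `a ↦ p(a_ψ) ⊗ x^ψ` with `p = starCan lam` -/
def kmap (hψ : IsEntwining k ψ) (hx1 : Coalgebra.comul (R := k) x = x ⊗ₜ[k] x)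
    (hQ : QprimeCond ψ x lam) : A →ₗ[k] (↥(Bprime ψ x)) ⊗[k] C :=
  LinearMap.rTensor C (LinearMap.codRestrict (Bprime ψ x) (starCan ψ x lam)
    (coinv hψ hx1 hQ)) ∘ₗ rho ψ x

lemma mu_lT_u (w : A ⊗[k] C) :
    LinearMap.mul' k A (LinearMap.lTensor A (u k) w) =
      TensorProduct.rid k A (LinearMap.lTensor A Coalgebra.counit w) := by
  induction w using TensorProduct.induction_on with
  | zero => simp
  | tmul a c => simp [u_apply, mul_smul_comm]
  | add y z hy hz => simp only [map_add, hy, hz]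

include hψ h1 h2 hQ

lemma gamma_colin : IsColin ψ x lamInv :=
  colin_of_inv hψ h1 h2 hQ

include hx1 in
lemma kmap_hmap (y : (↥(Bprime ψ x)) ⊗[k] C) :
    kmap hψ hx1 hQ (hmap (lamInv := lamInv) y) = y := by
  induction y using TensorProduct.induction_on with
  | zero => simp
  | add y z hy hz => simp only [map_add, hy, hz]
  | tmul b c =>
    rw [hmap_tmul, kmap, LinearMap.comp_apply, rho_mul_left hψ b.2,
      gamma_colin hψ h1 h2 hQ c]
    obtain r := Coalgebra.Repr.arbitrary k c
    rw [← r.eq, map_sum, TensorProduct.tmul_sum, map_sum, map_sum]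
    calc ∑ i ∈ r.index, LinearMap.rTensor C (LinearMap.codRestrict (Bprime ψ x)
          (starCan ψ x lam) (coinv hψ hx1 hQ))
          (Mact (k := k) ((b : A) ⊗ₜ[k] (lamInv (r.left i) ⊗ₜ[k] r.right i)))
        = ∑ i ∈ r.index, (Coalgebra.counit (R := k) (r.left i) • b) ⊗ₜ[k] r.right i := by
          refine Finset.sum_congr rfl fun i _ => ?_
          rw [Mact_tmul, LinearMap.rTensor_tmul]
          congr 1
          ext
          simp only [LinearMap.codRestrict_apply, SetLike.val_smul]
          rw [starCan_B_linear hψ lam b.2, starCan_colin (gamma_colin hψ h1 h2 hQ) lam,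
            h2, u_apply, mul_smul_comm, mul_one]
      _ = b ⊗ₜ[k] (∑ i ∈ r.index, Coalgebra.counit (R := k) (r.left i) • r.right i) := by
          rw [TensorProduct.tmul_sum]
          exact Finset.sum_congr rfl fun i _ => TensorProduct.smul_tmul _ _ _
      _ = b ⊗ₜ[k] c := by rw [counit_smul_sum c r]

include hx1 hx2 in
lemma hcore (a : A) :
    LinearMap.mul' k A (TensorProduct.map (starCan ψ x lam) lamInv (rho ψ x a)) = a := by
  have e1 : TensorProduct.map (starCan ψ x lam) lamInv (rho ψ x a)
      = LinearMap.lTensor A lamInv (LinearMap.rTensor C (starCan ψ x lam) (rho ψ x a)) := by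
    exact (LinearMap.congr_fun (LinearMap.lTensor_comp_rTensor _ _ _) (rho ψ x a)).symm
  have e2 : LinearMap.rTensor C (starCan ψ x lam) (rho ψ x a)
      = LinearMap.rTensor C (LinearMap.mul' k A ∘ₗ LinearMap.lTensor A lam)
          (LinearMap.rTensor C (rho ψ x) (rho ψ x a)) := by
    exact LinearMap.congr_fun (LinearMap.rTensor_comp C
      (LinearMap.mul' k A ∘ₗ LinearMap.lTensor A lam) (rho ψ x)) (rho ψ x a)
  have hmaps : LinearMap.mul' k A ∘ₗ LinearMap.lTensor A lamInv ∘ₗ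
      LinearMap.rTensor C (LinearMap.mul' k A ∘ₗ LinearMap.lTensor A lam)
    = (LinearMap.mul' k A ∘ₗ LinearMap.lTensor A
        (LinearMap.mul' k A ∘ₗ TensorProduct.map lam lamInv)) ∘ₗ
      (TensorProduct.assoc k A C C).toLinearMap := by
    apply TensorProduct.ext_threefold
    intro a c c'
    simp [mul_assoc]
  have e3 := LinearMap.congr_fun hmaps ((TensorProduct.assoc k A C C).symm
    (LinearMap.lTensor A Coalgebra.comul (rho ψ x a)))
  simp only [LinearMap.coe_comp, Function.comp_apply, LinearEquiv.coe_coe,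
    LinearEquiv.apply_symm_apply] at e3
  rw [e1, e2, rho_coassoc' hψ hx1, e3]
  rw [show LinearMap.lTensor A (LinearMap.mul' k A ∘ₗ TensorProduct.map lam lamInv)
        (LinearMap.lTensor A Coalgebra.comul (rho ψ x a))
      = LinearMap.lTensor A (conv lam lamInv) (rho ψ x a) by
    rw [← LinearMap.comp_apply, ← LinearMap.lTensor_comp]; rfl]
  rw [h1, mu_lT_u, counit_rho hψ hx2]

include hx1 hx2 in
lemma hmap_kmap (a : A) : hmap (lamInv := lamInv) (kmap hψ hx1 hQ a) = a := by
  have e : TensorProduct.map (Bprime ψ x).subtype lamInv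
      (LinearMap.rTensor C (LinearMap.codRestrict (Bprime ψ x) (starCan ψ x lam)
        (coinv hψ hx1 hQ)) (rho ψ x a))
      = TensorProduct.map (starCan ψ x lam) lamInv (rho ψ x a) := by
    rw [← LinearMap.comp_apply (TensorProduct.map (Bprime ψ x).subtype lamInv),
      LinearMap.map_comp_rTensor, LinearMap.subtype_comp_codRestrict]
  show LinearMap.mul' k A (TensorProduct.map (Bprime ψ x).subtype lamInv
    (LinearMap.rTensor C (LinearMap.codRestrict (Bprime ψ x) (starCan ψ x lam)
      (coinv hψ hx1 hQ)) (rho ψ x a))) = a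
  rw [e, hcore hψ hx1 hx2 h1 h2 hQ]

lemma hmap_colin (y : (↥(Bprime ψ x)) ⊗[k] C) :
    ψ (x ⊗ₜ[k] hmap (lamInv := lamInv) y)
      = LinearMap.rTensor C (hmap (lamInv := lamInv))
        ((TensorProduct.assoc k (↥(Bprime ψ x)) C C).symm
          (LinearMap.lTensor (↥(Bprime ψ x)) Coalgebra.comul y)) := by
  induction y using TensorProduct.induction_on with
  | zero => simp
  | add y z hy hz => simp only [map_add, TensorProduct.tmul_add, hy, hz]
  | tmul b c =>
    have helper : ∀ z : C ⊗[k] C,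
        LinearMap.rTensor C (hmap (lamInv := lamInv))
          ((TensorProduct.assoc k (↥(Bprime ψ x)) C C).symm (b ⊗ₜ[k] z))
        = Mact (k := k) ((b : A) ⊗ₜ[k] LinearMap.rTensor C lamInv z) := by
      intro z
      induction z using TensorProduct.induction_on with
      | zero => simp
      | tmul c1 c2 => simp [hmap_tmul]
      | add y z hy hz => simp only [map_add, TensorProduct.tmul_add, hy, hz]
    rw [LinearMap.lTensor_tmul, helper, hmap_tmul, ← rho_apply, rho_mul_left hψ b.2,
      gamma_colin hψ h1 h2 hQ c]

lemma hmap_blin (b : A) (hb : b ∈ Bprime ψ x) (b' : ↥(Bprime ψ x)) (c : C)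
    (hm : b * (b' : A) ∈ Bprime ψ x) :
    hmap (lamInv := lamInv) ((⟨b * (b' : A), hm⟩ : ↥(Bprime ψ x)) ⊗ₜ[k] c)
      = b * hmap (lamInv := lamInv) (b' ⊗ₜ[k] c) := by
  rw [hmap_tmul, hmap_tmul, mul_assoc]

lemma can_inj : Function.Injective (fun f : C →ₗ[k] A => starCan ψ x f) := by
  intro f f' hEq
  have hEq' : starCan ψ x f = starCan ψ x f' := hEq
  have hc : conv lamInv f = conv lamInv f' := by
    ext c
    rw [← starCan_colin (gamma_colin hψ h1 h2 hQ) f c,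
      ← starCan_colin (gamma_colin hψ h1 h2 hQ) f' c, hEq']
  calc f = conv (u k) f := (conv_u_left f).symm
    _ = conv (conv lam lamInv) f := by rw [h1]
    _ = conv lam (conv lamInv f) := conv_assoc _ _ _
    _ = conv lam (conv lamInv f') := by rw [hc]
    _ = conv (conv lam lamInv) f' := (conv_assoc _ _ _).symm
    _ = conv (u k) f' := by rw [h1]
    _ = f' := conv_u_left f'

include hx1 hx2 in
lemma can_surj (g : A →ₗ[k] A) (hg : ∀ b a : A, b ∈ Bprime ψ x → g (b * a) = b * g a) :
    ∃ f : C →ₗ[k] A, starCan ψ x f = g := by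
  refine ⟨conv lam (g ∘ₗ lamInv), ?_⟩
  ext a
  have hmaps : (LinearMap.mul' k A ∘ₗ LinearMap.lTensor A
        (LinearMap.mul' k A ∘ₗ TensorProduct.map lam (g ∘ₗ lamInv))) ∘ₗ
        (TensorProduct.assoc k A C C).toLinearMap
      = LinearMap.mul' k A ∘ₗ LinearMap.lTensor A (g ∘ₗ lamInv) ∘ₗ
        LinearMap.rTensor C (LinearMap.mul' k A ∘ₗ LinearMap.lTensor A lam) := by
    apply TensorProduct.ext_threefold
    intro a c c'
    simp [mul_assoc]
  have s1 : starCan ψ x (conv lam (g ∘ₗ lamInv)) a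
      = LinearMap.mul' k A (LinearMap.lTensor A (LinearMap.mul' k A ∘ₗ
          TensorProduct.map lam (g ∘ₗ lamInv))
          (LinearMap.lTensor A Coalgebra.comul (rho ψ x a))) := by
    rw [starCan_apply]
    congr 1
    exact LinearMap.congr_fun (LinearMap.lTensor_comp (M := A)
      (g := LinearMap.mul' k A ∘ₗ TensorProduct.map lam (g ∘ₗ lamInv))
      (f := Coalgebra.comul)) (rho ψ x a)
  have s2 := LinearMap.congr_fun hmaps (LinearMap.rTensor C (rho ψ x) (rho ψ x a))
  simp only [LinearMap.coe_comp, Function.comp_apply, LinearEquiv.coe_coe] at s2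
  have s3 : TensorProduct.map (starCan ψ x lam) (g ∘ₗ lamInv) (rho ψ x a)
      = LinearMap.lTensor A (g ∘ₗ lamInv) (LinearMap.rTensor C
          (LinearMap.mul' k A ∘ₗ LinearMap.lTensor A lam)
          (LinearMap.rTensor C (rho ψ x) (rho ψ x a))) := by
    rw [show LinearMap.rTensor C (LinearMap.mul' k A ∘ₗ LinearMap.lTensor A lam)
          (LinearMap.rTensor C (rho ψ x) (rho ψ x a))
        = LinearMap.rTensor C (starCan ψ x lam) (rho ψ x a) from
      (LinearMap.congr_fun (LinearMap.rTensor_comp C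
        (LinearMap.mul' k A ∘ₗ LinearMap.lTensor A lam) (rho ψ x)) (rho ψ x a)).symm]
    exact (LinearMap.congr_fun (LinearMap.lTensor_comp_rTensor _ _ _) (rho ψ x a)).symm
  have eB : ∀ w : A ⊗[k] C,
      LinearMap.mul' k A (TensorProduct.map (starCan ψ x lam) (g ∘ₗ lamInv) w)
        = g (LinearMap.mul' k A (TensorProduct.map (starCan ψ x lam) lamInv w)) := by
    intro w
    induction w using TensorProduct.induction_on with
    | zero => simp
    | tmul a' c => 
      simp only [TensorProduct.map_tmul, LinearMap.mul'_apply, LinearMap.coe_comp,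
        Function.comp_apply]
      exact (hg _ _ (coinv hψ hx1 hQ a')).symm
    | add y z hy hz => simp only [map_add, hy, hz]
  calc starCan ψ x (conv lam (g ∘ₗ lamInv)) a
      = LinearMap.mul' k A (TensorProduct.map (starCan ψ x lam) (g ∘ₗ lamInv) (rho ψ x a)) := by
        rw [s1, rho_coassoc hψ hx1, s2, ← s3]
    _ = g (LinearMap.mul' k A (TensorProduct.map (starCan ψ x lam) lamInv (rho ψ x a))) := eB _
    _ = g a := by rw [hcore hψ hx1 hx2 h1 h2 hQ]

end Forward

section Backward
open Coalgebra

lemma backward (hψ : IsEntwining k ψ) (hx1 : Coalgebra.comul (R := k) x = x ⊗ₜ[k] x)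
    (hinj : Function.Injective (fun f : C →ₗ[k] A => starCan ψ x f))
    (hsurj : ∀ g : A →ₗ[k] A, (∀ b a : A, b ∈ Bprime ψ x → g (b * a) = b * g a) →
      ∃ f : C →ₗ[k] A, starCan ψ x f = g)
    (h : (↥(Bprime ψ x)) ⊗[k] C →ₗ[k] A) (hbij : Function.Bijective h)
    (hBlin : ∀ (b : A) (hb : b ∈ Bprime ψ x) (b' : ↥(Bprime ψ x)) (c : C)
        (hm : b * (b' : A) ∈ Bprime ψ x),
      h ((⟨b * (b' : A), hm⟩ : ↥(Bprime ψ x)) ⊗ₜ[k] c) = b * h (b' ⊗ₜ[k] c))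
    (hcolin : ∀ y : (↥(Bprime ψ x)) ⊗[k] C,
      ψ (x ⊗ₜ[k] h y) = LinearMap.rTensor C h
        ((TensorProduct.assoc k (↥(Bprime ψ x)) C C).symm
          (LinearMap.lTensor (↥(Bprime ψ x)) Coalgebra.comul y))) :
    ∃ lam lamInv : C →ₗ[k] A,
      (∀ c : C, conv lam lamInv c = (Coalgebra.counit (R := k) c) • (1 : A)) ∧
      (∀ c : C, conv lamInv lam c = (Coalgebra.counit (R := k) c) • (1 : A)) ∧
      QprimeCond ψ x lam := by
  classical
  let oneB : ↥(Bprime ψ x) := ⟨1, one_mem_B hψ⟩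
  let γ : C →ₗ[k] A := h ∘ₗ (TensorProduct.mk k (↥(Bprime ψ x)) C oneB)
  have hγ_def : ∀ c, γ c = h (oneB ⊗ₜ[k] c) := fun c => rfl
  have h_tmul : ∀ (b : ↥(Bprime ψ x)) (c : C), h (b ⊗ₜ[k] c) = (b : A) * γ c := by
    intro b c
    have hm : (b : A) * ((oneB : ↥(Bprime ψ x)) : A) ∈ Bprime ψ x := by
      simpa [oneB, mul_one] using b.2
    have hb1 : (⟨(b : A) * ((oneB : ↥(Bprime ψ x)) : A), hm⟩ : ↥(Bprime ψ x)) = b :=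
      Subtype.ext (mul_one _)
    have hh := hBlin (b : A) b.2 oneB c hm
    rw [hb1] at hh
    exact hh
  have hγcolin : IsColin ψ x γ := by
    intro c
    have hc := hcolin (oneB ⊗ₜ[k] c)
    have helper : ∀ z : C ⊗[k] C,
        LinearMap.rTensor C h ((TensorProduct.assoc k (↥(Bprime ψ x)) C C).symm
          (oneB ⊗ₜ[k] z)) = LinearMap.rTensor C γ z := by
      intro z
      induction z using TensorProduct.induction_on with
      | zero => simp
      | tmul c1 c2 => simp [hγ_def]
      | add y z hy hz => simp only [map_add, TensorProduct.tmul_add, hy, hz]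
    rw [rho_apply, hγ_def, hc, LinearMap.lTensor_tmul, helper]
  let e : ((↥(Bprime ψ x)) ⊗[k] C) ≃ₗ[k] A := LinearEquiv.ofBijective h hbij
  have hesymm : ∀ a : A, h (e.symm a) = a := fun a => e.apply_symm_apply a
  have hsymmh : ∀ y, e.symm (h y) = y := fun y => e.symm_apply_apply y
  let bmulB : ∀ (b : A), b ∈ Bprime ψ x → (↥(Bprime ψ x) →ₗ[k] ↥(Bprime ψ x)) :=
    fun b hb => LinearMap.codRestrict (Bprime ψ x)
      ((LinearMap.mulLeft k b) ∘ₗ (Bprime ψ x).subtype)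
      (fun b' => mul_mem_B hψ hb b'.2)
  have hAct : ∀ (b : A) (hb : b ∈ Bprime ψ x) (y : (↥(Bprime ψ x)) ⊗[k] C),
      h (LinearMap.rTensor C (bmulB b hb) y) = b * h y := by
    intro b hb y
    induction y using TensorProduct.induction_on with
    | zero => simp
    | add y z hy hz => simp only [map_add, mul_add, hy, hz]
    | tmul b' c =>
      have hr : bmulB b hb b' = (⟨b * (b' : A), mul_mem_B hψ hb b'.2⟩ : ↥(Bprime ψ x)) := rfl
      rw [LinearMap.rTensor_tmul, hr, hBlin b hb b' c (mul_mem_B hψ hb b'.2)]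
  have hEsymm : ∀ (b : A) (hb : b ∈ Bprime ψ x) (a : A),
      e.symm (b * a) = LinearMap.rTensor C (bmulB b hb) (e.symm a) := by
    intro b hb a
    apply hbij.injective
    show h _ = h _
    rw [hesymm, hAct b hb, hesymm]
  let Tmap : (C →ₗ[k] A) → (A →ₗ[k] A) := fun t =>
    LinearMap.mul' k A ∘ₗ TensorProduct.map (Bprime ψ x).subtype t ∘ₗ e.symm.toLinearMap
  have hT1 : ∀ (t : C →ₗ[k] A) (c : C), Tmap t (γ c) = t c := by
    intro t c
    have hsc : e.symm (γ c) = oneB ⊗ₜ[k] c := by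
      rw [LinearEquiv.symm_apply_eq]; rfl
    show LinearMap.mul' k A (TensorProduct.map (Bprime ψ x).subtype t (e.symm (γ c))) = t c
    rw [hsc]
    simp [oneB]
  have hTB : ∀ (t : C →ₗ[k] A) (b a : A), b ∈ Bprime ψ x →
      Tmap t (b * a) = b * Tmap t a := by
    intro t b a hb
    have haux : ∀ y : (↥(Bprime ψ x)) ⊗[k] C,
        LinearMap.mul' k A (TensorProduct.map (Bprime ψ x).subtype t
          (LinearMap.rTensor C (bmulB b hb) y))
        = b * LinearMap.mul' k A (TensorProduct.map (Bprime ψ x).subtype t y) := by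
      intro y
      induction y using TensorProduct.induction_on with
      | zero => simp
      | add y z hy hz => simp only [map_add, mul_add, hy, hz]
      | tmul b' c =>
        have hr : bmulB b hb b' = (⟨b * (b' : A), mul_mem_B hψ hb b'.2⟩ : ↥(Bprime ψ x)) := rfl
        rw [LinearMap.rTensor_tmul, hr]
        simp only [TensorProduct.map_tmul, LinearMap.mul'_apply, Submodule.coe_subtype]
        exact mul_assoc b _ _
    show LinearMap.mul' k A (TensorProduct.map (Bprime ψ x).subtype t (e.symm (b * a)))
      = b * LinearMap.mul' k A (TensorProduct.map (Bprime ψ x).subtype t (e.symm a))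
    rw [hEsymm b hb a, haux]
  have hTcan : ∀ g : C →ₗ[k] A, Tmap (conv γ g) = starCan ψ x g := by
    intro g
    ext a
    have key : ∀ y : (↥(Bprime ψ x)) ⊗[k] C,
        Tmap (conv γ g) (h y) = starCan ψ x g (h y) := by
      intro y
      induction y using TensorProduct.induction_on with
      | zero => simp
      | add y z hy hz => simp only [map_add, hy, hz]
      | tmul b c =>
        have l1 : Tmap (conv γ g) (h (b ⊗ₜ[k] c)) = (b : A) * conv γ g c := by
          show LinearMap.mul' k A (TensorProduct.map (Bprime ψ x).subtype (conv γ g)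
            (e.symm (h (b ⊗ₜ[k] c)))) = _
          rw [hsymmh]
          simp
        rw [l1, h_tmul, starCan_B_linear hψ g b.2, starCan_colin hγcolin g c]
    calc Tmap (conv γ g) a = Tmap (conv γ g) (h (e.symm a)) := by rw [hesymm]
      _ = starCan ψ x g (h (e.symm a)) := key _
      _ = starCan ψ x g a := by rw [hesymm]
  have hTinj : ∀ t t' : C →ₗ[k] A, Tmap t = Tmap t' → t = t' := by
    intro t t' hE
    ext c
    rw [← hT1 t c, ← hT1 t' c, hE]
  have hLsurj : ∀ t : C →ₗ[k] A, ∃ g : C →ₗ[k] A, conv γ g = t := by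
    intro t
    obtain ⟨f, hf⟩ := hsurj (Tmap t) (fun b a hb => hTB t b a hb)
    exact ⟨f, hTinj _ _ (by rw [hTcan f, hf])⟩
  have hLinj : ∀ g g' : C →ₗ[k] A, conv γ g = conv γ g' → g = g' := by
    intro g g' hE
    apply hinj
    show starCan ψ x g = starCan ψ x g'
    rw [← hTcan g, ← hTcan g', hE]
  obtain ⟨f, hf⟩ := hLsurj (u k)
  have hfl : conv f γ = u k := by
    apply hLinj
    rw [← conv_assoc, hf, conv_u_left, conv_u_right]
  have hBall : ∀ a : A, starCan ψ x f a ∈ Bprime ψ x := by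
    have key : ∀ y : (↥(Bprime ψ x)) ⊗[k] C, starCan ψ x f (h y) ∈ Bprime ψ x := by
      intro y
      induction y using TensorProduct.induction_on with
      | zero => rw [map_zero, map_zero]; exact zero_mem _
      | add y z hy hz => rw [map_add, map_add]; exact add_mem hy hz
      | tmul b c =>
        rw [h_tmul, starCan_B_linear hψ f b.2, starCan_colin hγcolin f c, hf, u_apply,
          mul_smul_comm, mul_one]
        exact Submodule.smul_mem _ _ b.2
    intro a
    rw [← hesymm a]
    exact key _
  have hQf : QprimeCond ψ x f := qcrit hψ hx1 hγcolin hfl hBall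
  exact ⟨f, γ, fun c => by rw [hfl, u_apply], fun c => by rw [hf, u_apply], hQf⟩

end Backward

end Ent

/-- `(A,C,ψ,x)` is cleft iff `*can : #(C,A) → End_{B'}(A)` is bijective and the
right normal basis property holds (`A ≅ B' ⊗ C` as left `B'`-modules and right
`C`-comodules). -/
theorem cleft_iff_can_bijective_and_normal_basis
    (ψ : C ⊗[k] A →ₗ[k] A ⊗[k] C) (hψ : IsEntwining k ψ)
    (x : C) (hx1 : Coalgebra.comul (R := k) x = x ⊗ₜ[k] x)
    (hx2 : Coalgebra.counit (R := k) x = (1 : k)) :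
    IsCleft ψ x ↔
      -- *can takes values in End_{B'}(A) …
      ((∀ (f : C →ₗ[k] A) (b a : A), b ∈ Bprime ψ x →
          starCan ψ x f (b * a) = b * starCan ψ x f a) ∧
        -- … is injective …
        Function.Injective (fun f : C →ₗ[k] A => starCan ψ x f) ∧
        -- … and surjective onto End_{B'}(A)
        (∀ g : A →ₗ[k] A, (∀ b a : A, b ∈ Bprime ψ x → g (b * a) = b * g a) →
          ∃ f : C →ₗ[k] A, starCan ψ x f = g) ∧
        -- right normal basis property
        (∃ h : (↥(Bprime ψ x)) ⊗[k] C →ₗ[k] A,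
          Function.Bijective h ∧
          -- h is left B'-linear
          (∀ (b : A) (hb : b ∈ Bprime ψ x) (b' : ↥(Bprime ψ x)) (c : C)
              (hm : b * (b' : A) ∈ Bprime ψ x),
            h ((⟨b * (b' : A), hm⟩ : ↥(Bprime ψ x)) ⊗ₜ[k] c) = b * h (b' ⊗ₜ[k] c)) ∧
          -- h is right C-colinear
          (∀ y : (↥(Bprime ψ x)) ⊗[k] C,
            ψ (x ⊗ₜ[k] h y) = LinearMap.rTensor C h
              ((TensorProduct.assoc k (↥(Bprime ψ x)) C C).symm
                (LinearMap.lTensor (↥(Bprime ψ x)) Coalgebra.comul y))))) := by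
  constructor
  · rintro ⟨lam, lamInv, hc1, hc2, hQ⟩
    have h1 : conv lam lamInv = Ent.u k := LinearMap.ext fun c => by rw [hc1 c, Ent.u_apply]
    have h2 : conv lamInv lam = Ent.u k := LinearMap.ext fun c => by rw [hc2 c, Ent.u_apply]
    refine ⟨fun f b a hb => Ent.starCan_B_linear hψ f hb a,
      Ent.can_inj hψ h1 h2 hQ,
      fun g hg => Ent.can_surj hψ hx1 hx2 h1 h2 hQ g hg,
      ⟨Ent.hmap (ψ := ψ) (x := x) (lamInv := lamInv), ?_, ?_, ?_⟩⟩
    · exact ⟨Function.LeftInverse.injective (Ent.kmap_hmap hψ hx1 h1 h2 hQ),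
        fun a => ⟨Ent.kmap hψ hx1 hQ a, Ent.hmap_kmap hψ hx1 hx2 h1 h2 hQ a⟩⟩
    · exact Ent.hmap_blin hψ h1 h2 hQ
    · exact Ent.hmap_colin hψ h1 h2 hQ
  · rintro ⟨hlin, hinj, hsurj, h, hbij, hBlin, hcolin⟩
    obtain ⟨lam, lamInv, a1, a2, a3⟩ := Ent.backward hψ hx1 hinj hsurj h hbij hBlin hcolin
    exact ⟨lam, lamInv, a1, a2, a3⟩


end
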